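/- Matrix elements of multiplication: let r ≥ 0, δ > 0 and b₀ ∈ H^{r+1+δ}_x (spherically symmetric Sobolev space). Then for all j, k ∈ ℕ, |⟨b₀ e_j, e_k⟩| ≤ c(δ)‖b₀‖_{H^{r+1+δ}_x}(⟨k-j⟩^{-r} + (ω_j+ω_k)^{-r}), where the inner product is taken in L²([0,π], sin²(x)(2/π)dx), ω_n = n+1, and c(δ) is the embedding constant of H^{r+1+δ}_x into H^r(S¹). -/

import Mathlib

open MeasureTheory Finset intervalIntegral


/-- The spherically symmetric eigenfunctions `e_j(x) = sin((j+1)x)/sin x` on `(0,π)`. -/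
noncomputable def sphEig (j : ℕ) (x : ℝ) : ℝ := Real.sin (((j : ℝ) + 1) * x) / Real.sin x

/-- The embedding constant `c(δ) = √(2π) (∑_j (j+1)^{-1-2δ})^{1/2}` of `H^{r+1+δ}_x` into
`H^r(S¹,dx)`. -/
noncomputable def embConst (δ : ℝ) : ℝ :=
  Real.sqrt (2 * Real.pi) * Real.sqrt (∑' j : ℕ, ((j : ℝ) + 1) ^ (-(1 + 2 * δ)))

/-- matrix elements of multiplication: for `b₀ ∈ H^{r+1+δ}_x` (given through
its coefficients `bc`), for all `j,k`,
`|⟨b₀ e_j, e_k⟩| ≤ c(δ) ‖b₀‖_{H^{r+1+δ}_x} (⟨k-j⟩^{-r} + (ω_j+ω_k)^{-r})`,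
the inner product being that of `L²([0,π], sin²x (2/π)dx)`. -/
noncomputable def Cnt (i : ℕ) (c : ℤ) : ℝ :=
  ∑ l ∈ Finset.range (i+1), if ((i:ℤ) - 2*l + c) = 0 then Real.pi else 0

lemma cnt_nonneg (i : ℕ) (c : ℤ) : 0 ≤ Cnt i c := by
  apply Finset.sum_nonneg
  intro l _
  split <;> [exact Real.pi_pos.le; rfl]

lemma cnt_le_pi (i : ℕ) (c : ℤ) : Cnt i c ≤ Real.pi := by
  unfold Cnt
  by_cases h : ∃ l ∈ Finset.range (i+1), (i:ℤ) - 2*l + c = 0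
  · obtain ⟨l₀, hl₀, hp⟩ := h
    rw [Finset.sum_eq_single_of_mem l₀ hl₀ (fun l hl hne => by
      rw [if_neg]; intro hP; exact hne (by omega))]
    simp [hp]
  · rw [Finset.sum_eq_zero (fun l hl => by
      rw [if_neg]; intro hP; exact h ⟨l, hl, hP⟩)]
    exact Real.pi_pos.le

lemma cnt_eq_zero {i : ℕ} {c : ℤ} (h : i < c.natAbs) : Cnt i c = 0 := by
  apply Finset.sum_eq_zero
  intro l hl
  rw [Finset.mem_range] at hl
  rw [if_neg]
  intro hP
  omega

lemma sin_mul_sum_cos (i : ℕ) (x : ℝ) :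
    Real.sin x * ∑ l ∈ Finset.range (i+1), Real.cos (((i:ℝ) - 2*l) * x)
      = Real.sin (((i:ℝ) + 1) * x) := by
  set f : ℕ → ℝ := fun n => (1/2) * Real.sin (((i:ℝ) + 1 - 2*n) * x) with hf
  rw [Finset.mul_sum]
  calc ∑ l ∈ Finset.range (i+1), Real.sin x * Real.cos (((i:ℝ) - 2*l) * x)
      = ∑ l ∈ Finset.range (i+1), (f l - f (l+1)) := by
        refine Finset.sum_congr rfl fun l _ => ?_
        simp only [hf, Nat.cast_add, Nat.cast_one]
        have h1 : ((i:ℝ) + 1 - 2*(l:ℝ)) * x = x + ((i:ℝ) - 2*l) * x := by ring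
        have h2 : ((i:ℝ) + 1 - 2*((l:ℝ)+1)) * x = -(x - ((i:ℝ) - 2*l)*x) := by ring
        rw [h1, h2, Real.sin_add, Real.sin_neg, Real.sin_sub]
        ring
    _ = f 0 - f (i+1) := Finset.sum_range_sub' f (i+1)
    _ = Real.sin (((i:ℝ) + 1) * x) := by
        simp only [hf]
        have h0 : ((i:ℝ) + 1 - 2*((0:ℕ):ℝ)) * x = ((i:ℝ)+1)*x := by push_cast; ring
        have h4 : ((i:ℝ) + 1 - 2*(((i+1:ℕ)):ℝ)) * x = -(((i:ℝ)+1)*x) := by push_cast; ring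
        rw [h0, h4, Real.sin_neg]
        ring

lemma cos_mul_sin_mul_sin (u v w : ℝ) :
    Real.cos u * (Real.sin v * Real.sin w)
      = (1/4) * (Real.cos (u - v + w) + Real.cos (u + v - w)
          - Real.cos (u - v - w) - Real.cos (u + v + w)) := by
  simp only [Real.cos_add, Real.cos_sub, Real.sin_add, Real.sin_sub]
  ring

lemma integral_cos_int (n : ℤ) :
    ∫ x in (0:ℝ)..Real.pi, Real.cos ((n:ℝ) * x) = if n = 0 then Real.pi else 0 := by
  rcases eq_or_ne n 0 with h | h
  · simp [h, Real.pi_pos.le]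
  · have hn : (n:ℝ) ≠ 0 := Int.cast_ne_zero.mpr h
    rw [if_neg h]
    rw [intervalIntegral.integral_comp_mul_left Real.cos hn]
    simp [Real.sin_int_mul_pi]

lemma cosInt_intble (n : ℤ) (a b : ℝ) :
    IntervalIntegrable (fun x => Real.cos ((n:ℝ) * x)) MeasureTheory.volume a b :=
  (Real.continuous_cos.comp (continuous_const.mul continuous_id)).intervalIntegrable a b

lemma integral_cos_sin_sin (c a b : ℤ) :
    ∫ x in (0:ℝ)..Real.pi,
        Real.cos ((c:ℝ)*x) * (Real.sin ((a:ℝ)*x) * Real.sin ((b:ℝ)*x))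
      = (1/4) * ((if c - a + b = 0 then Real.pi else 0)
          + (if c + a - b = 0 then Real.pi else 0)
          - (if c - a - b = 0 then Real.pi else 0)
          - (if c + a + b = 0 then Real.pi else 0)) := by
  have h : ∀ x : ℝ, Real.cos ((c:ℝ)*x) * (Real.sin ((a:ℝ)*x) * Real.sin ((b:ℝ)*x))
      = (1/4) * (Real.cos (((c-a+b : ℤ):ℝ)*x) + Real.cos (((c+a-b : ℤ):ℝ)*x)
          - Real.cos (((c-a-b : ℤ):ℝ)*x) - Real.cos (((c+a+b : ℤ):ℝ)*x)) := by
    intro x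
    rw [cos_mul_sin_mul_sin ((c:ℝ)*x) ((a:ℝ)*x) ((b:ℝ)*x)]
    push_cast
    ring_nf
  simp only [h]
  rw [intervalIntegral.integral_const_mul,
    intervalIntegral.integral_sub
      (((cosInt_intble _ _ _).add (cosInt_intble _ _ _)).sub (cosInt_intble _ _ _))
      (cosInt_intble _ _ _),
    intervalIntegral.integral_sub
      ((cosInt_intble _ _ _).add (cosInt_intble _ _ _)) (cosInt_intble _ _ _),
    intervalIntegral.integral_add (cosInt_intble _ _ _) (cosInt_intble _ _ _),
    integral_cos_int, integral_cos_int, integral_cos_int, integral_cos_int]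

noncomputable def Tint (i j k : ℕ) : ℝ :=
  ∫ x in (0:ℝ)..Real.pi, sphEig i x * (Real.sin (((j:ℝ)+1)*x) * Real.sin (((k:ℝ)+1)*x))

lemma sin_nat_of_sin_eq_zero {x : ℝ} (n : ℕ) (hs : Real.sin x = 0) :
    Real.sin (((n:ℝ)+1) * x) = 0 := by
  obtain ⟨m, hm⟩ := Real.sin_eq_zero_iff.mp hs
  have : ((n:ℝ)+1) * x = (((n+1 : ℤ) * m : ℤ) : ℝ) * Real.pi := by
    rw [← hm]; push_cast; ring
  rw [this, Real.sin_int_mul_pi]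

lemma tint_eq (i j k : ℕ) :
    Tint i j k = (1/4) * (Cnt i ((k:ℤ) - j) + Cnt i ((j:ℤ) - k)
      - Cnt i (-((j:ℤ) + k + 2)) - Cnt i ((j:ℤ) + k + 2)) := by
  have hfun : (fun x => sphEig i x * (Real.sin (((j:ℝ)+1)*x) * Real.sin (((k:ℝ)+1)*x)))
      = fun x => ∑ l ∈ Finset.range (i+1),
          Real.cos ((((i:ℤ) - 2*l : ℤ):ℝ) * x)
            * (Real.sin (((j:ℝ)+1)*x) * Real.sin (((k:ℝ)+1)*x)) := by
    funext x
    rw [← Finset.sum_mul]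
    by_cases hs : Real.sin x = 0
    · rw [sin_nat_of_sin_eq_zero j hs]
      simp
    · have := sin_mul_sum_cos i x
      unfold sphEig
      have hsum : ∑ l ∈ Finset.range (i+1), Real.cos ((((i:ℤ) - 2*l : ℤ):ℝ) * x)
          = ∑ l ∈ Finset.range (i+1), Real.cos (((i:ℝ) - 2*l) * x) := by
        refine Finset.sum_congr rfl fun l _ => ?_; push_cast; ring_nf
      rw [hsum, ← this, mul_div_cancel_left₀ _ hs]
  unfold Tint
  rw [hfun, intervalIntegral.integral_finset_sum (fun l _ => by
    apply Continuous.intervalIntegrable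
    continuity)]
  have hterm : ∀ l ∈ Finset.range (i+1),
      (∫ x in (0:ℝ)..Real.pi, Real.cos ((((i:ℤ) - 2*l : ℤ):ℝ) * x)
          * (Real.sin (((j:ℝ)+1)*x) * Real.sin (((k:ℝ)+1)*x)))
      = (1/4) * ((if (i:ℤ)-2*l - ((j:ℤ)+1) + ((k:ℤ)+1) = 0 then Real.pi else 0)
          + (if (i:ℤ)-2*l + ((j:ℤ)+1) - ((k:ℤ)+1) = 0 then Real.pi else 0)
          - (if (i:ℤ)-2*l - ((j:ℤ)+1) - ((k:ℤ)+1) = 0 then Real.pi else 0)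
          - (if (i:ℤ)-2*l + ((j:ℤ)+1) + ((k:ℤ)+1) = 0 then Real.pi else 0)) := by
    intro l _
    rw [show ((j:ℝ)+1) = (((j:ℤ)+1 : ℤ):ℝ) from by push_cast; ring,
        show ((k:ℝ)+1) = (((k:ℤ)+1 : ℤ):ℝ) from by push_cast; ring]
    exact integral_cos_sin_sin _ _ _
  rw [Finset.sum_congr rfl hterm]
  unfold Cnt
  rw [← Finset.mul_sum]
  congr 1
  rw [Finset.sum_sub_distrib, Finset.sum_sub_distrib, Finset.sum_add_distrib]
  have e1 : ∀ l ∈ Finset.range (i+1),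
      (if (i:ℤ)-2*l - ((j:ℤ)+1) + ((k:ℤ)+1) = 0 then Real.pi else 0)
        = (if ((i:ℤ) - 2*l + ((k:ℤ) - j)) = 0 then Real.pi else 0) :=
    fun l _ => if_congr (by omega) rfl rfl
  have e2 : ∀ l ∈ Finset.range (i+1),
      (if (i:ℤ)-2*l + ((j:ℤ)+1) - ((k:ℤ)+1) = 0 then Real.pi else 0)
        = (if ((i:ℤ) - 2*l + ((j:ℤ) - k)) = 0 then Real.pi else 0) :=
    fun l _ => if_congr (by omega) rfl rfl
  have e3 : ∀ l ∈ Finset.range (i+1),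
      (if (i:ℤ)-2*l - ((j:ℤ)+1) - ((k:ℤ)+1) = 0 then Real.pi else 0)
        = (if ((i:ℤ) - 2*l + -((j:ℤ) + k + 2)) = 0 then Real.pi else 0) :=
    fun l _ => if_congr (by omega) rfl rfl
  have e4 : ∀ l ∈ Finset.range (i+1),
      (if (i:ℤ)-2*l + ((j:ℤ)+1) + ((k:ℤ)+1) = 0 then Real.pi else 0)
        = (if ((i:ℤ) - 2*l + ((j:ℤ) + k + 2)) = 0 then Real.pi else 0) :=
    fun l _ => if_congr (by omega) rfl rfl
  rw [Finset.sum_congr rfl e1, Finset.sum_congr rfl e2, Finset.sum_congr rfl e3,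
    Finset.sum_congr rfl e4]

lemma tint_abs_le (i j k : ℕ) : |Tint i j k| ≤ Real.pi / 2 := by
  rw [tint_eq, abs_mul, abs_of_nonneg (by norm_num : (0:ℝ) ≤ 1/4)]
  have h1 := cnt_nonneg i ((k:ℤ) - j); have h2 := cnt_nonneg i ((j:ℤ) - k)
  have h3 := cnt_nonneg i (-((j:ℤ) + k + 2)); have h4 := cnt_nonneg i ((j:ℤ) + k + 2)
  have g1 := cnt_le_pi i ((k:ℤ) - j); have g2 := cnt_le_pi i ((j:ℤ) - k)
  have g3 := cnt_le_pi i (-((j:ℤ) + k + 2)); have g4 := cnt_le_pi i ((j:ℤ) + k + 2)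
  have habs : |Cnt i ((k:ℤ) - j) + Cnt i ((j:ℤ) - k)
      - Cnt i (-((j:ℤ) + k + 2)) - Cnt i ((j:ℤ) + k + 2)| ≤ 2 * Real.pi :=
    abs_le.mpr ⟨by nlinarith, by nlinarith⟩
  nlinarith [Real.pi_pos]

lemma tint_eq_zero {i j k : ℕ} (h : i < ((k:ℤ) - j).natAbs) : Tint i j k = 0 := by
  rw [tint_eq, cnt_eq_zero h, cnt_eq_zero (by omega), cnt_eq_zero (by omega),
    cnt_eq_zero (by omega)]
  ring

lemma abs_sin_nat_mul_le (n : ℕ) (x : ℝ) : |Real.sin ((n:ℝ) * x)| ≤ (n:ℝ) * |Real.sin x| := by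
  induction n with
  | zero => simp
  | succ n ih =>
    have h : (((n+1:ℕ)):ℝ) * x = (n:ℝ)*x + x := by push_cast; ring
    rw [h, Real.sin_add]
    calc |Real.sin ((n:ℝ)*x) * Real.cos x + Real.cos ((n:ℝ)*x) * Real.sin x|
        ≤ |Real.sin ((n:ℝ)*x) * Real.cos x| + |Real.cos ((n:ℝ)*x) * Real.sin x| := abs_add_le _ _
      _ ≤ |Real.sin ((n:ℝ)*x)| * 1 + 1 * |Real.sin x| := by
          rw [abs_mul, abs_mul]
          gcongr
          · exact Real.abs_cos_le_one x
          · exact Real.abs_cos_le_one _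
      _ ≤ (n:ℝ) * |Real.sin x| + |Real.sin x| := by
          rw [mul_one, one_mul]
          have := abs_nonneg (Real.sin x)
          linarith [ih]
      _ = (((n+1:ℕ)):ℝ) * |Real.sin x| := by push_cast; ring

lemma sphEig_prod_bound (i j k : ℕ) (x : ℝ) :
    |sphEig i x * (Real.sin (((j:ℝ)+1)*x) * Real.sin (((k:ℝ)+1)*x))| ≤ (j:ℝ) + 1 := by
  by_cases hs : Real.sin x = 0
  · unfold sphEig
    rw [hs, div_zero, zero_mul, abs_zero]
    positivity
  · have hpos : 0 < |Real.sin x| := abs_pos.mpr hs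
    unfold sphEig
    rw [div_mul_eq_mul_div, abs_div, div_le_iff₀ hpos]
    have h1 : |Real.sin (((i:ℝ)+1)*x)| ≤ 1 := Real.abs_sin_le_one _
    have h2 : |Real.sin (((j:ℝ)+1)*x)| ≤ ((j:ℝ)+1) * |Real.sin x| := by
      have := abs_sin_nat_mul_le (j+1) x
      push_cast at this
      exact this
    have h3 : |Real.sin (((k:ℝ)+1)*x)| ≤ 1 := Real.abs_sin_le_one _
    have h4 : (0:ℝ) ≤ |Real.sin (((j:ℝ)+1)*x)| := abs_nonneg _
    have h5 : (0:ℝ) ≤ |Real.sin (((i:ℝ)+1)*x)| := abs_nonneg _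
    have h6 : (0:ℝ) ≤ |Real.sin (((k:ℝ)+1)*x)| := abs_nonneg _
    rw [abs_mul, abs_mul]
    calc |Real.sin (((i:ℝ)+1)*x)| * (|Real.sin (((j:ℝ)+1)*x)| * |Real.sin (((k:ℝ)+1)*x)|)
        ≤ 1 * (|Real.sin (((j:ℝ)+1)*x)| * |Real.sin (((k:ℝ)+1)*x)|) := by
          apply mul_le_mul_of_nonneg_right h1 (by positivity)
      _ = |Real.sin (((j:ℝ)+1)*x)| * |Real.sin (((k:ℝ)+1)*x)| := one_mul _
      _ ≤ (((j:ℝ)+1) * |Real.sin x|) * 1 := by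
          apply mul_le_mul h2 h3 h6 (by positivity)
      _ = ((j:ℝ)+1) * |Real.sin x| := mul_one _

lemma sphEig_measurable (i : ℕ) : Measurable (sphEig i) := by
  unfold sphEig
  exact (Real.continuous_sin.comp (continuous_const.mul continuous_id)).measurable.div
    Real.continuous_sin.measurable

lemma step_A (bc : ℕ → ℝ) (b0 : ℝ → ℝ) (j k : ℕ)
    (hb : ∀ x ∈ Set.Ioo 0 Real.pi, b0 x = ∑' i : ℕ, bc i * sphEig i x)
    (habs : Summable fun i => |bc i|) :
    ∫ x in (0:ℝ)..Real.pi, b0 x * sphEig j x * sphEig k x * Real.sin x ^ 2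
      = ∑' i : ℕ, bc i * Tint i j k := by
  have hpi := Real.pi_pos
  set μ := MeasureTheory.volume.restrict (Set.Ioo (0:ℝ) Real.pi) with hμ
  set F : ℕ → ℝ → ℝ := fun i x => bc i *
    (sphEig i x * (Real.sin (((j:ℝ)+1)*x) * Real.sin (((k:ℝ)+1)*x))) with hF
  have hmeas : ∀ i, AEStronglyMeasurable (F i) μ := fun i =>
    ((measurable_const.mul ((sphEig_measurable i).mul
      (((Real.continuous_sin.comp (continuous_const.mul continuous_id)).measurable).mul
       ((Real.continuous_sin.comp (continuous_const.mul continuous_id)).measurable)))) :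
        Measurable (F i)).aestronglyMeasurable
  have hbound : ∀ i, ∀ x : ℝ, ‖F i x‖ ≤ |bc i| * ((j:ℝ)+1) := by
    intro i x
    rw [hF, Real.norm_eq_abs, abs_mul]
    exact mul_le_mul_of_nonneg_left (sphEig_prod_bound i j k x) (abs_nonneg _)
  have hμuniv : μ Set.univ = ENNReal.ofReal Real.pi := by
    rw [hμ, Measure.restrict_apply_univ, Real.volume_Ioo, sub_zero]
  have hlint : ∑' i, ∫⁻ x, ‖F i x‖₊ ∂μ ≠ ⊤ := by
    have h1 : ∀ i, ∫⁻ x, ‖F i x‖₊ ∂μ ≤ ENNReal.ofReal ((|bc i| * ((j:ℝ)+1)) * Real.pi) := by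
      intro i
      calc ∫⁻ x, ‖F i x‖₊ ∂μ
          ≤ ∫⁻ _, ENNReal.ofReal (|bc i| * ((j:ℝ)+1)) ∂μ := by
            apply lintegral_mono
            intro x
            simp only [← enorm_eq_nnnorm, ← ofReal_norm]
            exact ENNReal.ofReal_le_ofReal (hbound i x)
        _ = ENNReal.ofReal (|bc i| * ((j:ℝ)+1)) * μ Set.univ := lintegral_const _
        _ = ENNReal.ofReal ((|bc i| * ((j:ℝ)+1)) * Real.pi) := by
            rw [hμuniv, ← ENNReal.ofReal_mul (by positivity)]
    refine ne_top_of_le_ne_top ?_ (ENNReal.tsum_le_tsum h1)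
    have hs : Summable fun i => (|bc i| * ((j:ℝ)+1)) * Real.pi :=
      (habs.mul_right _).mul_right _
    rw [← ENNReal.ofReal_tsum_of_nonneg (fun i => by positivity) hs]
    exact ENNReal.ofReal_ne_top
  have heq : ∀ x ∈ Set.Ioo (0:ℝ) Real.pi,
      b0 x * sphEig j x * sphEig k x * Real.sin x ^ 2 = ∑' i, F i x := by
    intro x hx
    have hs : Real.sin x ≠ 0 := ne_of_gt (Real.sin_pos_of_pos_of_lt_pi hx.1 hx.2)
    rw [hb x hx]
    have h1 : (∑' i, bc i * sphEig i x) * sphEig j x * sphEig k x * Real.sin x ^ 2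
        = ∑' i, (bc i * sphEig i x) * (sphEig j x * sphEig k x * Real.sin x ^ 2) := by
      rw [mul_assoc, mul_assoc, ← tsum_mul_right]
      exact tsum_congr fun i => by ring
    rw [h1]
    apply tsum_congr
    intro i
    rw [hF]
    simp only
    unfold sphEig
    field_simp
  rw [intervalIntegral.integral_of_le hpi.le, MeasureTheory.integral_Ioc_eq_integral_Ioo,
    MeasureTheory.setIntegral_congr_fun measurableSet_Ioo heq]
  rw [show ∫ x in Set.Ioo (0:ℝ) Real.pi, ∑' i, F i x = ∫ x, (∑' i, F i x) ∂μ from rfl]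
  rw [MeasureTheory.integral_tsum hmeas hlint]
  apply tsum_congr
  intro i
  rw [hF]
  simp only
  rw [MeasureTheory.integral_const_mul]
  unfold Tint
  rw [intervalIntegral.integral_of_le hpi.le, MeasureTheory.integral_Ioc_eq_integral_Ioo]

lemma summable_shift (q : ℝ) (hq : q < -1) :
    Summable (fun i : ℕ => ((i:ℝ) + 1) ^ q) := by
  have h := Real.summable_nat_rpow.mpr hq
  have h2 := (summable_nat_add_iff (f := fun n : ℕ => (n:ℝ) ^ q) 1).mpr h
  refine h2.congr fun n => ?_
  push_cast
  ring_nf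


theorem stmt13 (r δ : ℝ) (hr : 0 ≤ r) (hδ : 0 < δ) (b0 : ℝ → ℝ) (bc : ℕ → ℝ)
    (hb : ∀ x ∈ Set.Ioo 0 Real.pi, b0 x = ∑' j : ℕ, bc j * sphEig j x)
    (hsum : Summable fun j : ℕ => bc j ^ 2 * ((j : ℝ) + 1) ^ (2 * (r + 1 + δ)))
    (j k : ℕ) :
    |(2 / Real.pi) * ∫ x in (0:ℝ)..Real.pi, b0 x * sphEig j x * sphEig k x * Real.sin x ^ 2|
      ≤ embConst δ *
          Real.sqrt (∑' i : ℕ, bc i ^ 2 * ((i : ℝ) + 1) ^ (2 * (r + 1 + δ))) *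
          ((max 1 |(k : ℝ) - (j : ℝ)|) ^ (-r) + ((j : ℝ) + (k : ℝ) + 2) ^ (-r)) := by
  have hπ := Real.pi_pos
  set s : ℝ := r + 1 + δ with hs
  set Sd : ℝ := ∑' i : ℕ, ((i : ℝ) + 1) ^ (-(1 + 2 * δ)) with hSd
  set S : ℝ := ∑' i : ℕ, bc i ^ 2 * ((i : ℝ) + 1) ^ (2 * s) with hS
  set M : ℝ := max 1 |(k : ℝ) - (j : ℝ)| with hM
  have hM1 : (1:ℝ) ≤ M := le_max_left _ _
  have hM0 : (0:ℝ) < M := lt_of_lt_of_le one_pos hM1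
  -- summability of weights
  have hw : Summable (fun i : ℕ => ((i:ℝ) + 1) ^ (-(1 + 2*δ))) :=
    summable_shift _ (by linarith)
  have hw2 : Summable (fun i : ℕ => ((i:ℝ) + 1) ^ (-(2*s))) :=
    summable_shift _ (by simp only [hs]; linarith)
  -- summability of |bc|
  have hbase : ∀ i : ℕ, (0:ℝ) < (i:ℝ) + 1 := fun i => by positivity
  have hcomp : ∀ i : ℕ, |bc i| ≤ (1/2) * (bc i ^ 2 * ((i:ℝ)+1) ^ (2*s) + ((i:ℝ)+1) ^ (-(2*s))) := by
    intro i
    have hpow : ((i:ℝ)+1) ^ (2*s) * ((i:ℝ)+1) ^ (-(2*s)) = 1 := by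
      rw [← Real.rpow_add (hbase i)]; simp
    have h1 : (0:ℝ) < ((i:ℝ)+1) ^ (2*s) := Real.rpow_pos_of_pos (hbase i) _
    have h2 : (0:ℝ) < ((i:ℝ)+1) ^ (-(2*s)) := Real.rpow_pos_of_pos (hbase i) _
    nlinarith [sq_nonneg (|bc i| * ((i:ℝ)+1) ^ (2*s) - 1), sq_abs (bc i),
      sq_nonneg (|bc i| - ((i:ℝ)+1) ^ (-(2*s))), abs_nonneg (bc i)]
  have habs : Summable fun i => |bc i| :=
    Summable.of_nonneg_of_le (fun i => abs_nonneg _) hcomp ((hsum.add hw2).mul_left _)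
  -- rewrite via step_A
  rw [step_A bc b0 j k hb habs, abs_mul, abs_of_nonneg (by positivity : (0:ℝ) ≤ 2/Real.pi)]
  -- summability of the term series
  have hsummand : Summable fun i => |bc i| * |Tint i j k| := by
    refine Summable.of_nonneg_of_le (fun i => by positivity) (fun i => ?_)
      (habs.mul_right (Real.pi/2))
    exact mul_le_mul_of_nonneg_left (tint_abs_le i j k) (abs_nonneg _)
  have h0 : 2/Real.pi * |∑' i, bc i * Tint i j k|
      ≤ ∑' i, |bc i| * (2/Real.pi * |Tint i j k|) := by
    have h1 : |∑' i, bc i * Tint i j k| ≤ ∑' i, |bc i| * |Tint i j k| := by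
      have h2 := norm_tsum_le_tsum_norm (f := fun i => bc i * Tint i j k)
        (by simpa [Real.norm_eq_abs, abs_mul] using hsummand)
      simpa [Real.norm_eq_abs, abs_mul] using h2
    calc 2/Real.pi * |∑' i, bc i * Tint i j k|
        ≤ 2/Real.pi * ∑' i, |bc i| * |Tint i j k| :=
          mul_le_mul_of_nonneg_left h1 (by positivity)
      _ = ∑' i, 2/Real.pi * (|bc i| * |Tint i j k|) := (tsum_mul_left).symm
      _ = ∑' i, |bc i| * (2/Real.pi * |Tint i j k|) := tsum_congr fun i => by ring
  have hv : Summable fun i => |bc i| * (2/Real.pi * |Tint i j k|) := by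
    refine Summable.of_nonneg_of_le (fun i => by positivity) (fun i => ?_) habs
    have ht := tint_abs_le i j k
    have ht0 : 0 ≤ |Tint i j k| := abs_nonneg _
    have hle : 2/Real.pi * |Tint i j k| ≤ 1 := by
      rw [div_mul_eq_mul_div, div_le_one hπ]; linarith
    nlinarith [abs_nonneg (bc i)]
  have hkey : ∑' i, |bc i| * (2/Real.pi * |Tint i j k|)
      ≤ Real.sqrt S * (Real.sqrt Sd * M ^ (-r)) := by
    apply Summable.tsum_le_of_sum_le hv
    intro t
    set f : ℕ → ℝ := fun i => |bc i| * ((i:ℝ)+1) ^ s with hf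
    set g : ℕ → ℝ := fun i => ((i:ℝ)+1) ^ (-s) * (2/Real.pi * |Tint i j k|) with hg
    have hfg : ∀ i, |bc i| * (2/Real.pi * |Tint i j k|) = f i * g i := by
      intro i
      have hpow : ((i:ℝ)+1) ^ s * ((i:ℝ)+1) ^ (-s) = 1 := by
        rw [← Real.rpow_add (hbase i)]; simp
      calc |bc i| * (2/Real.pi * |Tint i j k|)
          = (((i:ℝ)+1) ^ s * ((i:ℝ)+1) ^ (-s)) * (|bc i| * (2/Real.pi * |Tint i j k|)) := by
            rw [hpow, one_mul]
        _ = f i * g i := by rw [hf, hg]; ring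
    have hf2 : ∀ i, f i ^ 2 = bc i ^ 2 * ((i:ℝ)+1) ^ (2*s) := by
      intro i
      rw [hf, mul_pow, sq_abs]
      congr 1
      rw [← Real.rpow_natCast (((i:ℝ)+1) ^ s) 2, ← Real.rpow_mul (hbase i).le]
      norm_num
      rw [mul_comm]
    have hg2 : ∀ i, g i ^ 2 ≤ M ^ (-(2*r)) * ((i:ℝ)+1) ^ (-(1 + 2*δ)) := by
      intro i
      by_cases hT : Tint i j k = 0
      · rw [hg]
        simp only [hT, abs_zero, mul_zero, zero_mul, mul_zero]
        norm_num
        positivity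
      · have him : ((k:ℤ) - j).natAbs ≤ i := by
          by_contra hc
          exact hT (tint_eq_zero (by omega))
      -- M ≤ i+1
        have hMi : M ≤ (i:ℝ) + 1 := by
          rw [hM]
          apply max_le
          · linarith [(hbase i).le]
          · have : |(k:ℝ) - (j:ℝ)| = ((((k:ℤ) - j).natAbs : ℝ)) := by
              rw [Nat.cast_natAbs]
              push_cast
              ring_nf
            rw [this]
            have : ((((k:ℤ) - j).natAbs : ℝ)) ≤ (i:ℝ) := by exact_mod_cast him
            linarith
        have hTle : 2/Real.pi * |Tint i j k| ≤ 1 := by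
          have ht := tint_abs_le i j k
          rw [div_mul_eq_mul_div, div_le_one hπ]; linarith
        have hT0 : 0 ≤ 2/Real.pi * |Tint i j k| := by positivity
        have e1 : g i ^ 2 ≤ ((i:ℝ)+1) ^ (-(2*s)) := by
          rw [hg, mul_pow]
          have : (2/Real.pi * |Tint i j k|) ^ 2 ≤ 1 := by nlinarith
          have hpp : (((i:ℝ)+1) ^ (-s)) ^ 2 = ((i:ℝ)+1) ^ (-(2*s)) := by
            rw [← Real.rpow_natCast (((i:ℝ)+1) ^ (-s)) 2, ← Real.rpow_mul (hbase i).le]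
            norm_num
            rw [mul_comm]
          rw [← hpp]
          nlinarith [sq_nonneg (((i:ℝ)+1) ^ (-s))]
        refine e1.trans ?_
        have e2 : ((i:ℝ)+1) ^ (-(2*s)) = ((i:ℝ)+1) ^ (-(2*r)) * ((i:ℝ)+1) ^ (-(2 + 2*δ)) := by
          rw [← Real.rpow_add (hbase i)]
          congr 1
          rw [hs]; ring
        rw [e2]
        have e3 : ((i:ℝ)+1) ^ (-(2*r)) ≤ M ^ (-(2*r)) :=
          Real.rpow_le_rpow_of_nonpos hM0 hMi (by linarith)
        have e4 : ((i:ℝ)+1) ^ (-(2 + 2*δ)) ≤ ((i:ℝ)+1) ^ (-(1 + 2*δ)) :=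
          Real.rpow_le_rpow_of_exponent_le (by linarith [hbase i]) (by linarith)
        apply mul_le_mul e3 e4 (Real.rpow_pos_of_pos (hbase i) _).le
          (Real.rpow_pos_of_pos hM0 _).le
    -- Cauchy–Schwarz
    have hCS := Finset.sum_mul_sq_le_sq_mul_sq t f g
    have hS0 : (0:ℝ) ≤ S := by
      rw [hS]; exact tsum_nonneg fun i => by positivity
    have hSd0 : (0:ℝ) ≤ Sd := by
      rw [hSd]; exact tsum_nonneg fun i => by positivity
    have hsum_f : ∑ i ∈ t, f i ^ 2 ≤ S := by
      calc ∑ i ∈ t, f i ^ 2 = ∑ i ∈ t, bc i ^ 2 * ((i:ℝ)+1) ^ (2*s) :=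
            Finset.sum_congr rfl fun i _ => hf2 i
        _ ≤ S := by rw [hS]; exact Summable.sum_le_tsum t (fun i _ => by positivity) hsum
    have hsum_g : ∑ i ∈ t, g i ^ 2 ≤ M ^ (-(2*r)) * Sd := by
      calc ∑ i ∈ t, g i ^ 2 ≤ ∑ i ∈ t, M ^ (-(2*r)) * ((i:ℝ)+1) ^ (-(1 + 2*δ)) :=
            Finset.sum_le_sum fun i _ => hg2 i
        _ = M ^ (-(2*r)) * ∑ i ∈ t, ((i:ℝ)+1) ^ (-(1 + 2*δ)) := by rw [Finset.mul_sum]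
        _ ≤ M ^ (-(2*r)) * Sd := by
            apply mul_le_mul_of_nonneg_left ?_ (Real.rpow_nonneg hM0.le _)
            rw [hSd]
            exact Summable.sum_le_tsum t (fun i _ => by positivity) hw
    have hMr : Real.sqrt (M ^ (-(2*r))) = M ^ (-r) := by
      have : M ^ (-(2*r)) = (M ^ (-r)) ^ 2 := by
        rw [← Real.rpow_natCast (M ^ (-r)) 2, ← Real.rpow_mul hM0.le]
        congr 1
        push_cast
        ring
      rw [this, Real.sqrt_sq (Real.rpow_nonneg hM0.le _)]
    calc ∑ i ∈ t, |bc i| * (2/Real.pi * |Tint i j k|)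
        = ∑ i ∈ t, f i * g i := Finset.sum_congr rfl fun i _ => hfg i
      _ ≤ Real.sqrt (S * (M ^ (-(2*r)) * Sd)) := by
          rw [Real.le_sqrt ?pos (by positivity)]
          case pos =>
            apply Finset.sum_nonneg
            intro i _
            rw [← hfg i]
            positivity
          calc (∑ i ∈ t, f i * g i) ^ 2 ≤ (∑ i ∈ t, f i ^ 2) * ∑ i ∈ t, g i ^ 2 := hCS
            _ ≤ S * (M ^ (-(2*r)) * Sd) := by
                apply mul_le_mul hsum_f hsum_g ?_ hS0
                apply Finset.sum_nonneg
                intro i _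
                positivity
      _ = Real.sqrt S * (Real.sqrt Sd * M ^ (-r)) := by
          rw [Real.sqrt_mul hS0, Real.sqrt_mul (Real.rpow_nonneg hM0.le _), hMr]
          ring
  -- conclude
  have hP0 : (0:ℝ) ≤ ((j:ℝ) + (k:ℝ) + 2) ^ (-r) := Real.rpow_nonneg (by positivity) _
  have h2pi : (1:ℝ) ≤ Real.sqrt (2 * Real.pi) := by
    rw [show (1:ℝ) = Real.sqrt 1 from (Real.sqrt_one).symm]
    exact Real.sqrt_le_sqrt (by linarith [Real.pi_gt_three])
  have hemb : embConst δ = Real.sqrt (2 * Real.pi) * Real.sqrt Sd := by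
    rw [embConst, hSd]
  have hS0 : (0:ℝ) ≤ S := by
    rw [hS]; exact tsum_nonneg fun i => by positivity
  have hSd0 : (0:ℝ) ≤ Sd := by
    rw [hSd]; exact tsum_nonneg fun i => by positivity
  have hMr0 : (0:ℝ) ≤ M ^ (-r) := Real.rpow_nonneg hM0.le _
  calc 2/Real.pi * |∑' i, bc i * Tint i j k|
      ≤ Real.sqrt S * (Real.sqrt Sd * M ^ (-r)) := h0.trans hkey
    _ ≤ Real.sqrt S * (Real.sqrt Sd * (M ^ (-r) + ((j:ℝ) + (k:ℝ) + 2) ^ (-r))) := by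
        apply mul_le_mul_of_nonneg_left ?_ (Real.sqrt_nonneg _)
        apply mul_le_mul_of_nonneg_left ?_ (Real.sqrt_nonneg _)
        linarith
    _ ≤ embConst δ * Real.sqrt S * (M ^ (-r) + ((j:ℝ) + (k:ℝ) + 2) ^ (-r)) := by
        rw [hemb]
        have hfac : (0:ℝ) ≤ Real.sqrt Sd * (M ^ (-r) + ((j:ℝ) + (k:ℝ) + 2) ^ (-r)) := by
          apply mul_nonneg (Real.sqrt_nonneg _)
          linarith
        nlinarith [Real.sqrt_nonneg S, Real.sqrt_nonneg Sd, mul_nonneg (Real.sqrt_nonneg S) hfac]
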